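/- In the real quadratic field K = ℚ(√2), the full modules m_A = ℤ + ℤ(√2 − 1) and m_B = ℤ + ℤ(2√2 − 2) are not similar: there is no nonzero α ∈ ℚ(√2) such that α·m_A = m_B. -/

import Mathlib

/-- In `K = ℚ(√2)`, the full modules `m_A = ℤ + ℤ(√2 - 1)` and
`m_B = ℤ + ℤ(2√2 - 2)` are not similar: there is no nonzero `α ∈ K` with `α·m_A = m_B`. -/
theorem modules_mA_mB_not_similar
    (K : Type*) [Field K] [Algebra ℚ K] (hdim : Module.finrank ℚ K = 2)
    (sq2 : K) (hsq2 : sq2 ^ 2 = 2)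
    (mA mB : Set K)
    (hmA : mA = {x : K | ∃ a b : ℤ, x = (a : K) + (b : K) * (sq2 - 1)})
    (hmB : mB = {x : K | ∃ a b : ℤ, x = (a : K) + (b : K) * (2 * sq2 - 2)}) :
    ¬∃ α : K, α ≠ 0 ∧ (fun x => α * x) '' mA = mB := by
  have hchar : CharZero K := charZero_of_injective_algebraMap (algebraMap ℚ K).injective
  -- sq2 is irrational
  have hr : ∀ r : ℚ, (r : K) ≠ sq2 := by
    intro r h
    have h2 : (r : K) ^ 2 = 2 := by rw [h]; exact hsq2
    have h3 : r ^ 2 = 2 := by exact_mod_cast h2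
    have h4 : ((r : ℝ)) ^ 2 = 2 := by exact_mod_cast h3
    have h5 : Real.sqrt 2 = |(r : ℝ)| := by
      rw [← h4, Real.sqrt_sq_eq_abs]
    exact irrational_sqrt_two ⟨|r|, by rw [h5]; push_cast; ring⟩
  -- linear independence of 1, sq2 over ℤ
  have hind : ∀ p q : ℤ, (p : K) + (q : K) * sq2 = 0 → p = 0 ∧ q = 0 := by
    intro p q h
    by_cases hq : q = 0
    · subst hq
      simp at h
      exact ⟨by exact_mod_cast h, rfl⟩
    · exfalso
      have hqK : (q : K) ≠ 0 := Int.cast_ne_zero.mpr hq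
      have : sq2 = ((-(p : ℚ) / (q : ℚ) : ℚ) : K) := by
        field_simp
        push_cast
        linear_combination ((q : K)⁻¹) * h - sq2 * (mul_inv_cancel₀ hqK)
      exact hr _ this.symm
  rintro ⟨α, hα, himg⟩
  have h1A : (1 : K) ∈ mA := by rw [hmA]; exact ⟨1, 0, by push_cast; ring⟩
  have hsA : sq2 - 1 ∈ mA := by rw [hmA]; exact ⟨0, 1, by push_cast; ring⟩
  have hαB : α ∈ mB := by
    rw [← himg]; exact ⟨1, h1A, mul_one α⟩
  have hαsB : α * (sq2 - 1) ∈ mB := by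
    rw [← himg]; exact ⟨sq2 - 1, hsA, rfl⟩
  rw [hmB] at hαB hαsB
  obtain ⟨a, b, hab⟩ := hαB
  obtain ⟨c, d, hcd⟩ := hαsB
  have h1B : (1 : K) ∈ mB := by rw [hmB]; exact ⟨1, 0, by push_cast; ring⟩
  rw [← himg] at h1B
  obtain ⟨m, hmA', hm1⟩ := h1B
  rw [hmA] at hmA'
  obtain ⟨u, v, huv⟩ := hmA'
  rw [huv] at hm1
  have key1 := hind (a*u + c*v - 2*(b*u) - 2*(d*v) - 1) (2*(b*u) + 2*(d*v))
    (by push_cast; linear_combination hm1 - (u : K) * hab - (v : K) * hcd)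
  have key2 := hind (6*b + 2*d - a - c) (a - 4*b - 2*d)
    (by push_cast; linear_combination hab + hcd - sq2 * hab - 2 * (b : K) * hsq2)
  obtain ⟨e1, _⟩ := key1
  obtain ⟨e2, e3⟩ := key2
  have hdvd : (2 : ℤ) ∣ 1 := ⟨b*u + d*u + b*v - d*v, by linear_combination -e1 + u*e3 - v*(e2 + e3)⟩
  norm_num at hdvd
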